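/- Let (𝔘, G, α) be a C*-dynamical system, 𝔙 ⊆ 𝔘 a *-subalgebra (not necessarily closed), f: G → ℝ_{>0}, and ω a state such that for some net g^i, lim_i f(g^i)(ω(α_{g^i}(A)B) − ω(α_{g^i}A)ω(B)) = 0 for all A, B ∈ 𝔙. Then for every n ≥ 2, lim_i f(g^i) c_n(α_{g^i}A_1, A_2, ..., A_n) = 0 for all A_1,...,A_n ∈ 𝔙; that is, all higher classical cumulants decay at least at the rate 1/f. -/

import Mathlib

open scoped Classical
open Filter Topology

noncomputable section

/-- `π` is a set-partition of the finite set `S ⊆ ℕ`: a collection of nonempty subsets of `S`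
such that every element of `S` lies in exactly one of them. -/
def IsSetPartition (S : Finset ℕ) (π : Finset (Finset ℕ)) : Prop :=
  (∀ V ∈ π, V ⊆ S) ∧ (∀ V ∈ π, V.Nonempty) ∧ ∀ a ∈ S, ∃! V, V ∈ π ∧ a ∈ V

/-- The finset of all set-partitions of `S`. -/
def setPartitions (S : Finset ℕ) : Finset (Finset (Finset ℕ)) :=
  S.powerset.powerset.filter (IsSetPartition S)

/-- A family of blocks is non-crossing if there are no `a < b < c < d` with `a, c` in one
block and `b, d` in a different block. -/
def IsNonCrossing (π : Finset (Finset ℕ)) : Prop :=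
  ¬ ∃ a b c d : ℕ, a < b ∧ b < c ∧ c < d ∧
      ∃ V ∈ π, ∃ W ∈ π, V ≠ W ∧ a ∈ V ∧ c ∈ V ∧ b ∈ W ∧ d ∈ W

/-- The finset of all non-crossing partitions of `S`. -/
def ncPartitions (S : Finset ℕ) : Finset (Finset (Finset ℕ)) :=
  (setPartitions S).filter IsNonCrossing

variable {𝔘 : Type*}


/-- The ordered list `A_{i_1}, …, A_{i_s}` of observables indexed by `V = {i_1 < ⋯ < i_s}`. -/
def blockList (A : ℕ → 𝔘) (V : Finset ℕ) : List 𝔘 :=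
  (V.sort (· ≤ ·)).map A

/-- The ordered product `A_{i_1} ⋯ A_{i_s}` over the block `V = {i_1 < ⋯ < i_s}`. -/
def blockProd [Monoid 𝔘] (A : ℕ → 𝔘) (V : Finset ℕ) : 𝔘 :=
  (blockList A V).prod

/-- The joint classical cumulant of `ω` of the observables `A_i`, `i ∈ S` (order preserved):
`c(S) = ∑_{π ∈ P(S)} (-1)^{|π|-1}(|π|-1)! ∏_{V ∈ π} ω(∏_{i ∈ V} A_i)`. -/
def cumulant [Monoid 𝔘] (ω : 𝔘 → ℂ) (A : ℕ → 𝔘) (S : Finset ℕ) : ℂ :=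
  ∑ π ∈ setPartitions S,
    (-1 : ℂ) ^ (π.card - 1) * ((π.card - 1).factorial : ℂ) * ∏ V ∈ π, ω (blockProd A V)

/-- `κ` (as a function of the ordered list of observables) is the family of free cumulants of
`ω`: it satisfies the moments-to-free-cumulants formula over non-crossing partitions. -/
def IsFreeCumulantFamily [Monoid 𝔘] (ω : 𝔘 → ℂ) (κ : List 𝔘 → ℂ) : Prop :=
  ∀ (A : ℕ → 𝔘) (S : Finset ℕ), S.Nonempty →
    ω (blockProd A S) = ∑ π ∈ ncPartitions S, ∏ V ∈ π, κ (blockList A V)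

/-- A state on a unital C*-algebra: a positive unital linear functional. -/
structure IsState [NormedRing 𝔘] [StarRing 𝔘] [NormedAlgebra ℂ 𝔘] (ω : 𝔘 →ₗ[ℂ] ℂ) : Prop where
  unital : ω 1 = 1
  positive : ∀ a : 𝔘, 0 ≤ (ω (star a * a)).re ∧ (ω (star a * a)).im = 0

/-- `α` is a representation of the group `G` by *-automorphisms. -/
def IsStarAutoRep {G : Type*} [Monoid G] [Ring 𝔘] [Algebra ℂ 𝔘] [StarRing 𝔘]
    (α : G → 𝔘 ≃⋆ₐ[ℂ] 𝔘) : Prop :=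
  ∀ (g h : G) (x : 𝔘), α (g * h) x = α g (α h x)


section Aux

lemma mem_setPartitions {S : Finset ℕ} {π : Finset (Finset ℕ)} :
    π ∈ setPartitions S ↔ IsSetPartition S π := by
  simp only [setPartitions, Finset.mem_filter, Finset.mem_powerset, and_iff_right_iff_imp]
  exact fun h V hV => Finset.mem_powerset.2 (h.1 V hV)

lemma block_eq {S : Finset ℕ} {π : Finset (Finset ℕ)} (hπ : IsSetPartition S π)
    {a : ℕ} {V W : Finset ℕ} (hV : V ∈ π) (hW : W ∈ π) (haV : a ∈ V) (haW : a ∈ W) : V = W := by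
  have haS : a ∈ S := hπ.1 V hV haV
  obtain ⟨U, -, hU⟩ := hπ.2.2 a haS
  rw [hU V ⟨hV, haV⟩, hU W ⟨hW, haW⟩]

lemma blockProd_empty [Monoid 𝔘] (A : ℕ → 𝔘) : blockProd A ∅ = 1 := by
  simp [blockProd, blockList]

lemma blockProd_cons [Monoid 𝔘] (A : ℕ → 𝔘) {V : Finset ℕ} (h1 : 1 ∈ V)
    (hpos : ∀ b ∈ V, 1 ≤ b) :
    blockProd A V = A 1 * blockProd A (V.erase 1) := by
  have hV : V = insert 1 (V.erase 1) := (Finset.insert_erase h1).symm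
  have hs : V.sort (· ≤ ·) = 1 :: (V.erase 1).sort (· ≤ ·) := by
    conv_lhs => rw [hV]
    exact Finset.sort_insert _ (fun b hb => hpos b (Finset.mem_of_mem_erase hb))
      (Finset.notMem_erase _ _)
  unfold blockProd blockList
  rw [hs, List.map_cons, List.prod_cons]

lemma blockProd_update_of_not_mem [Monoid 𝔘] (A : ℕ → 𝔘) (z : 𝔘) {V : Finset ℕ} (h1 : 1 ∉ V) :
    blockProd (Function.update A 1 z) V = blockProd A V := by
  unfold blockProd blockList
  congr 1
  refine List.map_congr_left fun a ha => ?_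
  have hm : a ∈ V := (Finset.mem_sort _).1 ha
  have : a ≠ 1 := fun h => h1 (h ▸ hm)
  exact Function.update_of_ne this _ _

def forget1 (π : Finset (Finset ℕ)) : Finset (Finset ℕ) :=
  (π.image (fun V => V.erase 1)).erase ∅

lemma forget1_isPartition {S : Finset ℕ} {π : Finset (Finset ℕ)}
    (hπ : IsSetPartition S π) : IsSetPartition (S.erase 1) (forget1 π) := by
  refine ⟨?_, ?_, ?_⟩
  · intro W hW
    obtain ⟨V, hV, rfl⟩ := Finset.mem_image.1 (Finset.mem_of_mem_erase hW)
    exact fun b hb => Finset.mem_erase.2 ⟨(Finset.mem_erase.1 hb).1, hπ.1 V hV (Finset.mem_of_mem_erase hb)⟩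
  · intro W hW
    exact Finset.nonempty_iff_ne_empty.2 (Finset.mem_erase.1 hW).1
  · intro a ha
    obtain ⟨ha1, haS⟩ := Finset.mem_erase.1 ha
    obtain ⟨V, ⟨hV, haV⟩, hu⟩ := hπ.2.2 a haS
    refine ⟨V.erase 1, ⟨?_, Finset.mem_erase.2 ⟨ha1, haV⟩⟩, ?_⟩
    · exact Finset.mem_erase.2 ⟨Finset.nonempty_iff_ne_empty.1 ⟨a, Finset.mem_erase.2 ⟨ha1, haV⟩⟩,
        Finset.mem_image.2 ⟨V, hV, rfl⟩⟩
    · rintro W ⟨hW, haW⟩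
      obtain ⟨V', hV', rfl⟩ := Finset.mem_image.1 (Finset.mem_of_mem_erase hW)
      rw [hu V' ⟨hV', Finset.mem_of_mem_erase haW⟩]

lemma forget1_eq {S : Finset ℕ} {π : Finset (Finset ℕ)} (hπ : IsSetPartition S π)
    {V0 : Finset ℕ} (hV0 : V0 ∈ π) (h1 : 1 ∈ V0) :
    forget1 π = if V0 = {1} then π.erase V0 else insert (V0.erase 1) (π.erase V0) := by
  have himg : π.image (fun V => V.erase 1) = insert (V0.erase 1) (π.erase V0) := by
    have hid : ∀ V ∈ π.erase V0, V.erase 1 = V := by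
      intro V hV
      have hVπ := Finset.mem_of_mem_erase hV
      have h1V : 1 ∉ V := fun h => (Finset.mem_erase.1 hV).1 (block_eq hπ hVπ hV0 h h1)
      exact Finset.erase_eq_of_notMem h1V
    conv_lhs => rw [← Finset.insert_erase hV0]
    rw [Finset.image_insert]
    congr 1
    rw [Finset.image_congr (fun V hV => hid V hV)]
    exact Finset.image_id
  have hne : ∀ V ∈ π.erase V0, V ≠ (∅ : Finset ℕ) :=
    fun V hV => Finset.nonempty_iff_ne_empty.1 (hπ.2.1 V (Finset.mem_of_mem_erase hV))
  unfold forget1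
  rw [himg]
  split_ifs with h
  · subst h
    rw [show ({1} : Finset ℕ).erase 1 = ∅ by simp]
    exact Finset.erase_insert (fun h => hne _ h rfl)
  · have hV0ne : V0.erase 1 ≠ ∅ := by
      intro hemp
      apply h
      apply Finset.Subset.antisymm
      · intro a haV0
        by_cases ha1 : a = 1
        · simp [ha1]
        · exact absurd (Finset.mem_erase.2 ⟨ha1, haV0⟩) (by simp [hemp])
      · simpa using h1
    refine Finset.erase_eq_of_notMem ?_
    simp only [Finset.mem_insert, not_or]
    exact ⟨fun hh => hV0ne hh.symm, fun hh => hne _ hh rfl⟩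

lemma erase_one_ne_empty {V0 : Finset ℕ} (h1 : 1 ∈ V0) (h : V0 ≠ {1}) : V0.erase 1 ≠ ∅ := by
  intro hemp
  apply h
  apply Finset.Subset.antisymm
  · intro a haV0
    by_cases ha1 : a = 1
    · simp [ha1]
    · exact absurd (Finset.mem_erase.2 ⟨ha1, haV0⟩) (by simp [hemp])
  · simpa using h1

lemma fiber_eq {S : Finset ℕ} (hS1 : 1 ∈ S) {σ : Finset (Finset ℕ)}
    (hσ : IsSetPartition (S.erase 1) σ) :
    (setPartitions S).filter (fun π => forget1 π = σ) =
      insert (insert {1} σ) (σ.image (fun V => insert (insert 1 V) (σ.erase V))) := by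
  have h1σ : ∀ V ∈ σ, 1 ∉ V := fun V hV h => (Finset.mem_erase.1 (hσ.1 V hV h)).1 rfl
  ext π
  simp only [Finset.mem_filter, Finset.mem_insert, Finset.mem_image]
  constructor
  · rintro ⟨hπ', hfπ⟩
    have hπ := mem_setPartitions.1 hπ'
    obtain ⟨V0, ⟨hV0, h1V0⟩, -⟩ := hπ.2.2 1 hS1
    rw [forget1_eq hπ hV0 h1V0] at hfπ
    by_cases hcase : V0 = {1}
    · rw [if_pos hcase] at hfπ
      left
      rw [← hfπ, ← hcase, Finset.insert_erase hV0]
    · right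
      rw [if_neg hcase] at hfπ
      refine ⟨V0.erase 1, ?_, ?_⟩
      · rw [← hfπ]; exact Finset.mem_insert_self _ _
      · have hnm : V0.erase 1 ∉ π.erase V0 := by
          intro hmem
          obtain ⟨a, ha⟩ := Finset.nonempty_iff_ne_empty.2 (erase_one_ne_empty h1V0 hcase)
          have := block_eq hπ (Finset.mem_of_mem_erase hmem) hV0 ha (Finset.mem_of_mem_erase ha)
          rw [← this] at h1V0
          exact Finset.notMem_erase 1 V0 h1V0
        rw [← hfπ, Finset.erase_insert hnm, Finset.insert_erase h1V0,
          Finset.insert_erase hV0]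
  · intro h
    rcases h with h | ⟨V, hV, rfl⟩
    · subst h
      have h1s : ({1} : Finset ℕ) ∉ σ := fun hh => h1σ _ hh (Finset.mem_singleton_self 1)
      have hpart : IsSetPartition S (insert {1} σ) := by
        refine ⟨?_, ?_, ?_⟩
        · intro W hW
          rcases Finset.mem_insert.1 hW with rfl | hW
          · simpa using hS1
          · exact (hσ.1 W hW).trans (Finset.erase_subset _ _)
        · intro W hW
          rcases Finset.mem_insert.1 hW with rfl | hW
          · exact ⟨1, by simp⟩
          · exact hσ.2.1 W hW
        · intro a ha
          by_cases ha1 : a = 1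
          · subst ha1
            refine ⟨{1}, ⟨Finset.mem_insert_self _ _, by simp⟩, ?_⟩
            rintro W ⟨hW, h1W⟩
            rcases Finset.mem_insert.1 hW with rfl | hW
            · rfl
            · exact absurd h1W (h1σ W hW)
          · obtain ⟨V, ⟨hVσ, haV⟩, hu⟩ := hσ.2.2 a (Finset.mem_erase.2 ⟨ha1, ha⟩)
            refine ⟨V, ⟨Finset.mem_insert_of_mem hVσ, haV⟩, ?_⟩
            rintro W ⟨hW, haW⟩
            rcases Finset.mem_insert.1 hW with rfl | hW
            · exact absurd (Finset.mem_singleton.1 haW) ha1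
            · exact hu W ⟨hW, haW⟩
      refine ⟨mem_setPartitions.2 hpart, ?_⟩
      rw [forget1_eq hpart (Finset.mem_insert_self _ _) (by simp)]
      rw [if_pos rfl, Finset.erase_insert h1s]
    · have h1V : 1 ∉ V := h1σ V hV
      have hVS : V ⊆ S := (hσ.1 V hV).trans (Finset.erase_subset _ _)
      have hV1ne : insert 1 V ∉ σ.erase V := fun hh =>
        h1σ _ (Finset.mem_of_mem_erase hh) (Finset.mem_insert_self _ _)
      have hpart : IsSetPartition S (insert (insert 1 V) (σ.erase V)) := by
        refine ⟨?_, ?_, ?_⟩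
        · intro W hW
          rcases Finset.mem_insert.1 hW with rfl | hW
          · exact Finset.insert_subset hS1 hVS
          · exact (hσ.1 W (Finset.mem_of_mem_erase hW)).trans (Finset.erase_subset _ _)
        · intro W hW
          rcases Finset.mem_insert.1 hW with rfl | hW
          · exact ⟨1, Finset.mem_insert_self _ _⟩
          · exact hσ.2.1 W (Finset.mem_of_mem_erase hW)
        · intro a ha
          by_cases haV1 : a ∈ insert 1 V
          · refine ⟨insert 1 V, ⟨Finset.mem_insert_self _ _, haV1⟩, ?_⟩
            rintro W ⟨hW, haW⟩
            rcases Finset.mem_insert.1 hW with rfl | hW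
            · rfl
            · exfalso
              have ha1 : a ≠ 1 := fun hh =>
                h1σ _ (Finset.mem_of_mem_erase hW) (hh ▸ haW)
              have haV : a ∈ V := by
                rcases Finset.mem_insert.1 haV1 with hh | hh
                · exact absurd hh ha1
                · exact hh
              have := block_eq hσ (Finset.mem_of_mem_erase hW) hV haW haV
              exact (Finset.mem_erase.1 hW).1 this
          · have ha1 : a ≠ 1 := fun hh => haV1 (hh ▸ Finset.mem_insert_self _ _)
            obtain ⟨W, ⟨hWσ, haW⟩, hu⟩ := hσ.2.2 a (Finset.mem_erase.2 ⟨ha1, ha⟩)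
            have hWV : W ≠ V := fun hh =>
              haV1 (Finset.mem_insert_of_mem (hh ▸ haW))
            refine ⟨W, ⟨Finset.mem_insert_of_mem (Finset.mem_erase.2 ⟨hWV, hWσ⟩), haW⟩, ?_⟩
            rintro U ⟨hU, haU⟩
            rcases Finset.mem_insert.1 hU with rfl | hU
            · exact absurd haU haV1
            · exact hu U ⟨Finset.mem_of_mem_erase hU, haU⟩
      refine ⟨mem_setPartitions.2 hpart, ?_⟩
      have hVne1 : insert 1 V ≠ {1} := by
        obtain ⟨a, haV⟩ := hσ.2.1 V hV
        intro hh
        have : a ∈ ({1} : Finset ℕ) := hh ▸ Finset.mem_insert_of_mem haV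
        exact (h1V (Finset.mem_singleton.1 this ▸ haV))
      rw [forget1_eq hpart (Finset.mem_insert_self _ _) (Finset.mem_insert_self _ _),
        if_neg hVne1, Finset.erase_insert hV1ne, Finset.erase_insert h1V,
        Finset.insert_erase hV]

lemma key_vanish {S : Finset ℕ} (hS1 : 1 ∈ S) (hS2 : 2 ≤ S.card)
    (x : Finset ℕ → ℂ) (hx : x ∅ = 1) :
    ∑ π ∈ setPartitions S, (-1 : ℂ) ^ (π.card - 1) * ((π.card - 1).factorial : ℂ) *
      ∏ V ∈ π, (if 1 ∈ V then x (V.erase 1) else x V) = 0 := by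
  have hmaps : ∀ π ∈ setPartitions S, forget1 π ∈ setPartitions (S.erase 1) :=
    fun π hπ => mem_setPartitions.2 (forget1_isPartition (mem_setPartitions.1 hπ))
  rw [← Finset.sum_fiberwise_of_maps_to hmaps]
  refine Finset.sum_eq_zero fun σ hσ' => ?_
  have hσ := mem_setPartitions.1 hσ'
  have h1σ : ∀ V ∈ σ, 1 ∉ V := fun V hV h => (Finset.mem_erase.1 (hσ.1 V hV h)).1 rfl
  have h1s : ({1} : Finset ℕ) ∉ σ := fun hh => h1σ _ hh (Finset.mem_singleton_self 1)
  -- σ is nonempty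
  have hTne : (S.erase 1).Nonempty := by
    rw [← Finset.card_pos, Finset.card_erase_of_mem hS1]
    omega
  obtain ⟨b, hb⟩ := hTne
  obtain ⟨Vb, ⟨hVbσ, -⟩, -⟩ := hσ.2.2 b hb
  obtain ⟨k, hk⟩ : ∃ k, σ.card = k + 1 :=
    ⟨σ.card - 1, (Nat.succ_pred_eq_of_pos (Finset.card_pos.2 ⟨Vb, hVbσ⟩)).symm⟩
  rw [fiber_eq hS1 hσ]
  -- p0 not in image
  have hp0 : insert {1} σ ∉ σ.image (fun V => insert (insert 1 V) (σ.erase V)) := by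
    intro hh
    obtain ⟨V, hV, heq⟩ := Finset.mem_image.1 hh
    have h1mem : ({1} : Finset ℕ) ∈ insert (insert 1 V) (σ.erase V) := by
      rw [heq]; exact Finset.mem_insert_self _ _
    rcases Finset.mem_insert.1 h1mem with hh2 | hh2
    · obtain ⟨a, haV⟩ := hσ.2.1 V hV
      have : a ∈ ({1} : Finset ℕ) := hh2 ▸ Finset.mem_insert_of_mem haV
      exact h1σ V hV (Finset.mem_singleton.1 this ▸ haV)
    · exact h1s (Finset.mem_of_mem_erase hh2)
  rw [Finset.sum_insert hp0]
  -- injectivity for sum_image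
  rw [Finset.sum_image (by
    intro V hV W hW heq
    have h1mem : insert 1 V ∈ insert (insert 1 W) (σ.erase W) := by
      rw [← show insert (insert 1 V) (σ.erase V) = insert (insert 1 W) (σ.erase W) from heq]; exact Finset.mem_insert_self _ _
    rcases Finset.mem_insert.1 h1mem with hh | hh
    · have := congrArg (Finset.erase · 1) hh
      simpa [Finset.erase_insert (h1σ V hV), Finset.erase_insert (h1σ W hW)] using this
    · exact absurd (Finset.mem_insert_self 1 V)
        (fun hm => h1σ _ (Finset.mem_of_mem_erase hh) hm))]
  -- compute p0 term
  have hcard0 : (insert {1} σ).card = k + 2 := by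
    rw [Finset.card_insert_of_notMem h1s, hk]
  have hprod0 : ∏ W ∈ insert {1} σ, (if 1 ∈ W then x (W.erase 1) else x W)
      = ∏ W ∈ σ, x W := by
    rw [Finset.prod_insert h1s, if_pos (Finset.mem_singleton_self 1)]
    rw [show ({1} : Finset ℕ).erase 1 = ∅ by simp, hx, one_mul]
    exact Finset.prod_congr rfl fun W hW => if_neg (h1σ W hW)
  -- compute q V term
  have hterm : ∀ V ∈ σ,
      (-1 : ℂ) ^ ((insert (insert 1 V) (σ.erase V)).card - 1) *
        (((insert (insert 1 V) (σ.erase V)).card - 1).factorial : ℂ) *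
        ∏ W ∈ insert (insert 1 V) (σ.erase V), (if 1 ∈ W then x (W.erase 1) else x W)
      = (-1 : ℂ) ^ k * (k.factorial : ℂ) * ∏ W ∈ σ, x W := by
    intro V hV
    have hV1ne : insert 1 V ∉ σ.erase V := fun hh =>
      h1σ _ (Finset.mem_of_mem_erase hh) (Finset.mem_insert_self _ _)
    have hcard : (insert (insert 1 V) (σ.erase V)).card = k + 1 := by
      rw [Finset.card_insert_of_notMem hV1ne, Finset.card_erase_of_mem hV, hk]
      omega
    have hprod : ∏ W ∈ insert (insert 1 V) (σ.erase V),
        (if 1 ∈ W then x (W.erase 1) else x W) = ∏ W ∈ σ, x W := by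
      rw [Finset.prod_insert hV1ne, if_pos (Finset.mem_insert_self 1 V),
        Finset.erase_insert (h1σ V hV)]
      rw [Finset.prod_congr rfl fun W hW =>
        if_neg (h1σ W (Finset.mem_of_mem_erase hW))]
      exact Finset.mul_prod_erase σ x hV
    rw [hcard, hprod]
    norm_num
  rw [Finset.sum_congr rfl hterm, Finset.sum_const, hk, hcard0, hprod0, nsmul_eq_mul]
  norm_num [Nat.factorial_succ]
  ring

/-- the block of `π` containing `1`, when it exists and is unique -/
def blk1 (π : Finset (Finset ℕ)) : Finset ℕ :=
  if h : ∃! V, V ∈ π ∧ 1 ∈ V then h.choose else ∅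

lemma blk1_spec {π : Finset (Finset ℕ)} (h : ∃! V, V ∈ π ∧ 1 ∈ V) :
    blk1 π ∈ π ∧ 1 ∈ blk1 π := by
  rw [blk1, dif_pos h]
  exact h.choose_spec.1

end Aux

/-- if the covariance is f(g)-clustering on a *-subalgebra 𝔙, then all higher
classical cumulants of elements of 𝔙 decay at least at the rate 1/f along the net. -/
theorem classical_cumulant_rate_of_decay {G ι : Type*} [Group G] [TopologicalSpace G] [IsTopologicalGroup G]
    [LocallyCompactSpace G]
    [NormedRing 𝔘] [StarRing 𝔘] [CStarRing 𝔘] [NormedAlgebra ℂ 𝔘] [StarModule ℂ 𝔘]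
    [CompleteSpace 𝔘]
    (α : G → 𝔘 ≃⋆ₐ[ℂ] 𝔘) (hα : IsStarAutoRep α)
    (ω : 𝔘 →ₗ[ℂ] ℂ) (hω : IsState ω)
    (l : Filter ι) (g : ι → G)
    (𝔙 : StarSubalgebra ℂ 𝔘) (f : G → ℝ) (hf : ∀ x : G, 0 < f x)
    (hcl : ∀ A ∈ 𝔙, ∀ B ∈ 𝔙, Filter.Tendsto
      (fun i => (f (g i) : ℂ) * (ω (α (g i) A * B) - ω (α (g i) A) * ω B)) l (𝓝 0)) :
    ∀ n, 2 ≤ n → ∀ A : ℕ → 𝔘, (∀ j, A j ∈ 𝔙) →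
      Filter.Tendsto
        (fun i => (f (g i) : ℂ) *
          cumulant ⇑ω (Function.update A 1 (α (g i) (A 1))) (Finset.Icc 1 n))
        l (𝓝 0) := by
  intro n hn A hA
  set S := Finset.Icc 1 n with hSdef
  have hS1 : 1 ∈ S := Finset.mem_Icc.2 ⟨le_refl 1, le_trans one_le_two hn⟩
  have hScard : 2 ≤ S.card := by rw [hSdef, Nat.card_Icc]; omega
  have hposS : ∀ a ∈ S, 1 ≤ a := fun a ha => (Finset.mem_Icc.1 ha).1
  set x : Finset ℕ → ℂ := fun V => ω (blockProd A V) with hxdef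
  have hx : x ∅ = 1 := by rw [hxdef]; simp only [blockProd_empty]; exact hω.unital
  set coef : Finset (Finset ℕ) → ℂ :=
    fun π => (-1 : ℂ) ^ (π.card - 1) * ((π.card - 1).factorial : ℂ) with hcoefdef
  set Bf : Finset (Finset ℕ) → 𝔘 := fun π => blockProd A ((blk1 π).erase 1) with hBfdef
  set M : Finset (Finset ℕ) → ℂ :=
    fun π => ∏ V ∈ π.erase (blk1 π), ω (blockProd A V) with hMdef
  -- facts about blocks
  have hblk : ∀ π ∈ setPartitions S, blk1 π ∈ π ∧ 1 ∈ blk1 π ∧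
      (∀ V ∈ π.erase (blk1 π), 1 ∉ V) := by
    intro π hπ'
    have hπ := mem_setPartitions.1 hπ'
    have hex : ∃! V, V ∈ π ∧ 1 ∈ V := hπ.2.2 1 hS1
    obtain ⟨hb1, hb2⟩ := blk1_spec hex
    refine ⟨hb1, hb2, fun V hV h1V => ?_⟩
    exact (Finset.mem_erase.1 hV).1
      (block_eq hπ (Finset.mem_of_mem_erase hV) hb1 h1V hb2)
  -- step 1: expand the cumulant of the updated family
  have hstep1 : ∀ i, cumulant ⇑ω (Function.update A 1 (α (g i) (A 1))) S
      = ∑ π ∈ setPartitions S, coef π * (ω (α (g i) (A 1) * Bf π) * M π) := by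
    intro i
    unfold cumulant
    refine Finset.sum_congr rfl fun π hπ' => ?_
    have hπ := mem_setPartitions.1 hπ'
    obtain ⟨hb1, hb2, hb3⟩ := hblk π hπ'
    have hprod : ∏ V ∈ π, ω (blockProd (Function.update A 1 (α (g i) (A 1))) V)
        = ω (α (g i) (A 1) * Bf π) * M π := by
      rw [← Finset.mul_prod_erase π _ hb1]
      congr 1
      · congr 1
        rw [blockProd_cons _ hb2 (fun b hb => hposS b (hπ.1 _ hb1 hb)),
          Function.update_self,
          blockProd_update_of_not_mem A _ (Finset.notMem_erase 1 _)]
      · exact Finset.prod_congr rfl fun V hV => by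
          rw [blockProd_update_of_not_mem A _ (hb3 V hV)]
    rw [hprod, hcoefdef]
  -- the exact vanishing of the factorized sum
  have hzero : ∑ π ∈ setPartitions S, coef π * (ω (Bf π) * M π) = 0 := by
    have := key_vanish hS1 hScard x hx
    rw [← this]
    refine Finset.sum_congr rfl fun π hπ' => ?_
    have hπ := mem_setPartitions.1 hπ'
    obtain ⟨hb1, hb2, hb3⟩ := hblk π hπ'
    have : ∏ V ∈ π, (if 1 ∈ V then x (V.erase 1) else x V) = ω (Bf π) * M π := by
      rw [← Finset.mul_prod_erase π _ hb1, if_pos hb2]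
      congr 1
      exact Finset.prod_congr rfl fun V hV => if_neg (hb3 V hV)
    rw [this, hcoefdef]
  -- the error terms
  set E : Finset (Finset ℕ) → ι → ℂ := fun π i =>
    (f (g i) : ℂ) * (ω (α (g i) (A 1) * Bf π) - ω (α (g i) (A 1)) * ω (Bf π)) with hEdef
  have hfun : ∀ i, (f (g i) : ℂ) *
      cumulant ⇑ω (Function.update A 1 (α (g i) (A 1))) S
      = ∑ π ∈ setPartitions S, (coef π * M π) * E π i := by
    intro i
    rw [hstep1 i, Finset.mul_sum]
    have expand : ∀ π ∈ setPartitions S,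
        (f (g i) : ℂ) * (coef π * (ω (α (g i) (A 1) * Bf π) * M π))
        = (coef π * M π) * E π i
          + ((f (g i) : ℂ) * ω (α (g i) (A 1))) * (coef π * (ω (Bf π) * M π)) := by
      intro π _
      rw [hEdef]
      ring
    rw [Finset.sum_congr rfl expand, Finset.sum_add_distrib, ← Finset.mul_sum, hzero,
      mul_zero, add_zero]
  have hmem : ∀ π : Finset (Finset ℕ), Bf π ∈ 𝔙 := by
    intro π
    refine list_prod_mem fun y hy => ?_
    obtain ⟨j, -, rfl⟩ := List.mem_map.1 hy
    exact hA j
  have htend : Filter.Tendsto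
      (fun i => ∑ π ∈ setPartitions S, (coef π * M π) * E π i) l (𝓝 0) := by
    have h0 : (0 : ℂ) = ∑ π ∈ setPartitions S, 0 := by simp
    rw [h0]
    refine tendsto_finset_sum _ fun π hπ => ?_
    have := (hcl (A 1) (hA 1) (Bf π) (hmem π)).const_mul (coef π * M π)
    simpa [hEdef] using this
  have heq : (fun i => (f (g i) : ℂ) *
      cumulant ⇑ω (Function.update A 1 (α (g i) (A 1))) (Finset.Icc 1 n))
      = fun i => ∑ π ∈ setPartitions S, (coef π * M π) * E π i := by
    funext i
    rw [← hSdef]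
    exact hfun i
  rw [heq]
  exact htend
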